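/- For every positive integer n, FF(K_n□K_n, lex) = 2^⌈log₂ n⌉, where K_n□K_n carries the lexicographic order induced by the natural order on the vertices 0,1,…,n−1 of each factor K_n. -/

import Mathlib

open SimpleGraph

/-- First-Fit (greedy) coloring of `G` with respect to the vertex ordering given by the
injective position function `ord` (vertex `u` comes before `v` iff `ord u < ord v`).
Each vertex receives the smallest positive integer not used on earlier neighbors. -/
noncomputable def firstFit {V : Type*} (G : SimpleGraph V) (ord : V → ℕ) : V → ℕ :=
  (InvImage.wf ord Nat.lt_wfRel.wf).fix
    (fun v ih => sInf {c : ℕ | 1 ≤ c ∧ ∀ u, ∀ h : ord u < ord v, G.Adj u v → ih u h ≠ c})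

/-- `FFColors G ord` is the number of colors used by the First-Fit coloring. -/
noncomputable def FFColors {V : Type*} [Fintype V] (G : SimpleGraph V) (ord : V → ℕ) : ℕ :=
  (Finset.univ.image (firstFit G ord)).card

open Classical in
/-- First-Fit coloring of `(G, ord)` subject to the pre-coloring `C₀` on the set `S`:
vertices of `S` keep their pre-assigned colors and are skipped by the scan; every other
vertex receives the smallest positive integer not already assigned (or pre-assigned)
to a neighbor. -/
noncomputable def firstFitWith {V : Type*} (G : SimpleGraph V) (ord : V → ℕ)
    (S : Set V) (C₀ : V → ℕ) : V → ℕ :=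
  (InvImage.wf ord Nat.lt_wfRel.wf).fix
    (fun v ih =>
      if v ∈ S then C₀ v
      else sInf {c : ℕ | 1 ≤ c ∧ (∀ u, G.Adj u v → u ∈ S → C₀ u ≠ c) ∧
        ∀ u, ∀ h : ord u < ord v, G.Adj u v → u ∉ S → ih u h ≠ c})

/-- Position function of the lexicographic order on `V × W` induced by the position
functions `σ` on `V` and `σ'` on `W` (for injective `σ, σ'`: `(u,v)` comes before
`(u',v')` iff `σ u < σ u'`, or `u = u'` and `σ' v < σ' v'`). -/
noncomputable def lexPos {V W : Type*} [Fintype W] (σ : V → ℕ) (σ' : W → ℕ) : V × W → ℕ :=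
  fun p => σ p.1 * (Finset.univ.sup σ' + 1) + σ' p.2

/-- A proper coloring with colors in the positive integers. -/
def IsProperColoring {V : Type*} (G : SimpleGraph V) (C : V → ℕ) : Prop :=
  (∀ v, 1 ≤ C v) ∧ ∀ ⦃u v⦄, G.Adj u v → C u ≠ C v

/-- `D` is a `(C, ord)`-descent: `D = {v} ∪ N` where `C v = y`, `x < y` is a (positive)
color, `N` is the set of neighbors of `v` of color `x`, and every `u ∈ N` comes after
`v` in the order. -/
def IsDescent {V : Type*} (G : SimpleGraph V) (ord : V → ℕ) (C : V → ℕ) (D : Set V) : Prop :=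
  ∃ v x, 1 ≤ x ∧ x < C v ∧
    (∀ u, G.Adj u v → C u = x → ord v < ord u) ∧
    D = insert v {u | G.Adj u v ∧ C u = x}

/-- The Grundy number: the maximum of `FFColors G ord` over all vertex orderings. -/
noncomputable def grundy {V : Type*} [Fintype V] (G : SimpleGraph V) : ℕ :=
  sSup {n | ∃ ord : V → ℕ, Function.Injective ord ∧ FFColors G ord = n}

/-- The independence number of `G`. -/
noncomputable def indepNum {V : Type*} [Fintype V] (G : SimpleGraph V) : ℕ :=
  sSup {n | ∃ s : Finset V, (∀ u ∈ s, ∀ v ∈ s, ¬ G.Adj u v) ∧ s.card = n}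

/-- An `m × n` Latin rectangle: entries in `{1, …, n}`, no repeats in rows or columns. -/
def IsLatinRectangle {m n : ℕ} (R : Fin m → Fin n → ℕ) : Prop :=
  (∀ i j, R i j ∈ Finset.Icc 1 n) ∧ (∀ i, Function.Injective (R i)) ∧
    (∀ j, Function.Injective (fun i => R i j))

/-- `S` is a greedy defining set of the rectangle `R` (cells scanned in lexicographic,
i.e. row-by-row, order): the greedy completion, which skips the cells of `S` (fixed to
their values in `R`) and places in each other cell the smallest positive integer not yet
appearing in its row or column, reproduces `R`.  This is First-Fit on the rook's graph
`K_m □ K_n` subject to the pre-coloring of `S` by `R`. -/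
noncomputable def IsRectGDS {m n : ℕ} (R : Fin m → Fin n → ℕ) (S : Set (Fin m × Fin n)) : Prop :=
  firstFitWith ((⊤ : SimpleGraph (Fin m)).boxProd (⊤ : SimpleGraph (Fin n)))
    (lexPos Fin.val Fin.val) S (fun p => R p.1 p.2) = fun p => R p.1 p.2

/-- The Latin square `L_k` of order `2^k`: the entry in row `i`, column `j` is
`2^k - (i XOR j)`; equivalently the `k`-fold tensor product of `[[2,1],[1,2]]`. -/
def Lsquare (k : ℕ) : Fin (2 ^ k) → Fin (2 ^ k) → ℕ :=
  fun i j => 2 ^ k - (i.val ^^^ j.val)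
lemma sup_fin_val {n : ℕ} (hn : 0 < n) :
    (Finset.univ.sup (Fin.val : Fin n → ℕ)) = n - 1 := by
  apply le_antisymm
  · exact Finset.sup_le fun i _ => by omega
  · exact Finset.le_sup (f := (Fin.val : Fin n → ℕ)) (b := ⟨n - 1, by omega⟩)
      (Finset.mem_univ _)

lemma lexPos_eval {n : ℕ} (hn : 0 < n) (p : Fin n × Fin n) :
    lexPos Fin.val Fin.val p = p.1.val * n + p.2.val := by
  have := sup_fin_val hn
  simp only [lexPos, this]
  have h1 : n - 1 + 1 = n := by omega
  rw [h1]

lemma firstFit_unfold {V : Type*} (G : SimpleGraph V) (ord : V → ℕ) (v : V) :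
    firstFit G ord v =
      sInf {c : ℕ | 1 ≤ c ∧ ∀ u, ord u < ord v → G.Adj u v →
        firstFit G ord u ≠ c} := by
  show (InvImage.wf ord Nat.lt_wfRel.wf).fix _ v = _
  rw [WellFounded.fix_eq]
  rfl

lemma firstFit_rook_eq {n : ℕ} (hn : 0 < n) (p : Fin n × Fin n) :
    firstFit ((⊤ : SimpleGraph (Fin n)).boxProd (⊤ : SimpleGraph (Fin n)))
      (lexPos Fin.val Fin.val) p = (p.1.val ^^^ p.2.val) + 1 := by
  set G := (⊤ : SimpleGraph (Fin n)).boxProd (⊤ : SimpleGraph (Fin n)) with hG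
  set ord : Fin n × Fin n → ℕ := lexPos Fin.val Fin.val with hord
  suffices H : ∀ N (p : Fin n × Fin n), ord p < N →
      firstFit G ord p = (p.1.val ^^^ p.2.val) + 1 by
    exact H (ord p + 1) p (Nat.lt_succ_self _)
  intro N
  induction N with
  | zero => intro p hp; omega
  | succ N ih =>
    intro p hp
    have key : ∀ u : Fin n × Fin n, ord u < ord p →
        firstFit G ord u = (u.1.val ^^^ u.2.val) + 1 := fun u hu => ih u (by omega)
    rw [firstFit_unfold]
    set S : Set ℕ := {c : ℕ | 1 ≤ c ∧ ∀ u, ord u < ord p → G.Adj u p →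
        firstFit G ord u ≠ c} with hS
    have hmem : (p.1.val ^^^ p.2.val) + 1 ∈ S := by
      refine ⟨Nat.le_add_left _ _, fun u hu hadj heq => ?_⟩
      rw [key u hu] at heq
      have hxor : u.1.val ^^^ u.2.val = p.1.val ^^^ p.2.val := by omega
      rw [hG, SimpleGraph.boxProd_adj] at hadj
      rcases hadj with ⟨h1, h2⟩ | ⟨h1, h2⟩
      · rw [SimpleGraph.top_adj] at h1
        rw [h2] at hxor
        rw [Nat.xor_left_inj] at hxor
        exact h1 (Fin.ext hxor)
      · rw [SimpleGraph.top_adj] at h1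
        rw [h2] at hxor
        rw [Nat.xor_right_inj] at hxor
        exact h1 (Fin.ext hxor)
    have hlb : ∀ c ∈ S, (p.1.val ^^^ p.2.val) + 1 ≤ c := by
      rintro c ⟨hc1, hc2⟩
      by_contra hlt
      push_neg at hlt
      have hclt : c - 1 < p.1.val ^^^ p.2.val := by omega
      rcases Nat.lt_xor_cases hclt with h | h
      · -- (c-1) ^^^ p.2 < p.1 : same column neighbor above
        set i' : Fin n := ⟨(c - 1) ^^^ p.2.val, lt_trans h p.1.isLt⟩ with hi'
        set u : Fin n × Fin n := (i', p.2) with hu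
        have hou : ord u < ord p := by
          rw [hord, lexPos_eval hn, lexPos_eval hn]
          have hv1 : (u.1 : ℕ) = (c - 1) ^^^ p.2.val := rfl
          have hv2 : (u.2 : ℕ) = p.2.val := rfl
          rw [hv1, hv2]
          have : ((c - 1) ^^^ p.2.val) * n < p.1.val * n := (Nat.mul_lt_mul_right hn).mpr h
          omega
        have hadj : G.Adj u p := by
          rw [hG, SimpleGraph.boxProd_adj]
          left
          refine ⟨(SimpleGraph.top_adj _ _).mpr fun hh => ?_, rfl⟩
          have h1 : (u.1 : ℕ) = p.1.val := congrArg Fin.val hh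
          have h2 : (u.1 : ℕ) = (c - 1) ^^^ p.2.val := rfl
          omega
        have := hc2 u hou hadj
        rw [key u hou] at this
        apply this
        show (((c - 1) ^^^ p.2.val) ^^^ p.2.val) + 1 = c
        rw [Nat.xor_xor_cancel_right]
        omega
      · -- (c-1) ^^^ p.1 < p.2 : same row neighbor to the left
        set j' : Fin n := ⟨(c - 1) ^^^ p.1.val, lt_trans h p.2.isLt⟩ with hj'
        set u : Fin n × Fin n := (p.1, j') with hu
        have hou : ord u < ord p := by
          rw [hord, lexPos_eval hn, lexPos_eval hn]
          have hv1 : (u.1 : ℕ) = p.1.val := rfl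
          have hv2 : (u.2 : ℕ) = (c - 1) ^^^ p.1.val := rfl
          rw [hv1, hv2]
          omega
        have hadj : G.Adj u p := by
          rw [hG, SimpleGraph.boxProd_adj]
          right
          refine ⟨(SimpleGraph.top_adj _ _).mpr fun hh => ?_, rfl⟩
          have h1 : (u.2 : ℕ) = p.2.val := congrArg Fin.val hh
          have h2 : (u.2 : ℕ) = (c - 1) ^^^ p.1.val := rfl
          omega
        have := hc2 u hou hadj
        rw [key u hou] at this
        apply this
        show (p.1.val ^^^ ((c - 1) ^^^ p.1.val)) + 1 = c
        rw [Nat.xor_comm (c-1) p.1.val, Nat.xor_xor_cancel_left]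
        omega
    exact le_antisymm (Nat.sInf_le hmem) (hlb _ (Nat.sInf_mem ⟨_, hmem⟩))

lemma mid_bit {k a : ℕ} (h1 : 2 ^ k ≤ a) (h2 : a < 2 ^ (k + 1)) :
    a.testBit k = true := by
  rw [Nat.testBit_eq_decide_div_mod_eq]
  have : a / 2 ^ k = 1 := Nat.div_eq_of_lt_le (by omega) (by
    rw [Nat.pow_succ] at h2; omega)
  simp [this]

lemma xor_surj {n : ℕ} (hn : 0 < n) {x : ℕ} (hx : x < 2 ^ Nat.clog 2 n) :
    ∃ p : Fin n × Fin n, p.1.val ^^^ p.2.val = x := by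
  by_cases hxn : x < n
  · exact ⟨(⟨0, hn⟩, ⟨x, hxn⟩), Nat.zero_xor x⟩
  · push_neg at hxn
    have hn1 : 1 < n := by
      by_contra h
      have hne : n = 1 := by omega
      subst hne
      rw [Nat.clog_one_right, pow_zero] at hx
      omega
    set k := Nat.clog 2 n with hk
    have hk1 : 1 ≤ k := by
      rw [hk]
      have := Nat.clog_pos (b := 2) (by norm_num) (n := n) hn1
      omega
    have hlow : 2 ^ (k - 1) < n := by
      have := Nat.pow_pred_clog_lt_self (b := 2) (by norm_num) hn1
      exact this
    have hkeq : k - 1 + 1 = k := by omega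
    have hb1 : (n - 1).testBit (k - 1) = true :=
      mid_bit (by omega) (by rw [hkeq]; have := Nat.le_pow_clog (b := 2) (by norm_num) n; omega)
    have hb2 : x.testBit (k - 1) = true :=
      mid_bit (by omega) (by rw [hkeq]; exact hx)
    set j := (n - 1) ^^^ x with hj
    have hjlt : j < 2 ^ (k - 1) := by
      by_contra hge
      push_neg at hge
      obtain ⟨i, hik, hib⟩ := Nat.exists_ge_and_testBit_of_ge_two_pow hge
      rcases eq_or_lt_of_le hik with heq | hlt
      · rw [hj, Nat.testBit_xor, ← heq, hb1, hb2] at hib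
        simp at hib
      · have hik' : k ≤ i := by omega
        have h2i : 2 ^ k ≤ 2 ^ i := Nat.pow_le_pow_right (by norm_num) hik'
        have hx' : x < 2 ^ i := by omega
        have hn' : n - 1 < 2 ^ i := by
          have := Nat.le_pow_clog (b := 2) (by norm_num) n
          omega
        rw [hj, Nat.testBit_xor, Nat.testBit_lt_two_pow hn', Nat.testBit_lt_two_pow hx'] at hib
        simp at hib
    refine ⟨(⟨n - 1, by omega⟩, ⟨j, by omega⟩), ?_⟩
    show (n - 1) ^^^ ((n - 1) ^^^ x) = x
    exact Nat.xor_xor_cancel_left _ _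


/-- For every positive integer `n`,
`FF(K_n □ K_n, lex) = 2 ^ ⌈log₂ n⌉`. -/
theorem FF_complete_boxProd_self_lex (n : ℕ) (hn : 0 < n) :
    FFColors ((⊤ : SimpleGraph (Fin n)).boxProd (⊤ : SimpleGraph (Fin n)))
      (lexPos Fin.val Fin.val) = 2 ^ Nat.clog 2 n := by
  rw [FFColors]
  have hcongr : Finset.univ.image
      (firstFit ((⊤ : SimpleGraph (Fin n)).boxProd (⊤ : SimpleGraph (Fin n)))
        (lexPos Fin.val Fin.val)) =
      Finset.univ.image (fun p : Fin n × Fin n => (p.1.val ^^^ p.2.val) + 1) :=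
    Finset.image_congr fun p _ => firstFit_rook_eq hn p
  rw [hcongr]
  have himg : Finset.univ.image (fun p : Fin n × Fin n => (p.1.val ^^^ p.2.val) + 1) =
      (Finset.range (2 ^ Nat.clog 2 n)).image (· + 1) := by
    ext m
    simp only [Finset.mem_image, Finset.mem_univ, true_and, Finset.mem_range]
    constructor
    · rintro ⟨p, rfl⟩
      have h1 : p.1.val < 2 ^ Nat.clog 2 n := by
        have := Nat.le_pow_clog (b := 2) (by norm_num) n
        have := p.1.isLt; omega
      have h2 : p.2.val < 2 ^ Nat.clog 2 n := by
        have := Nat.le_pow_clog (b := 2) (by norm_num) n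
        have := p.2.isLt; omega
      exact ⟨_, Nat.xor_lt_two_pow h1 h2, rfl⟩
    · rintro ⟨x, hx, rfl⟩
      obtain ⟨p, hp⟩ := xor_surj hn hx
      exact ⟨p, by rw [hp]⟩
  rw [himg, Finset.card_image_of_injective _ (add_left_injective 1), Finset.card_range]
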